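/- The only critical point of f(x,c) = 45x^4 + 156cx^3 + (182c^2-552)x^2 + (76c^3-880c)x + 5c^4 - 200c^2 + 2000 lying in the set K = {(x,c) : -2 ≤ c ≤ 0, 0 ≤ x ≤ -5c/3} is (0,0), i.e., the only point of K where both partial derivatives ∂f/∂x and ∂f/∂c vanish is (0,0). -/

import Mathlib

theorem unique_critical_point_in_K (f : ℝ → ℝ → ℝ)
    (hf : ∀ x c, f x c = 45 * x ^ 4 + 156 * c * x ^ 3 + (182 * c ^ 2 - 552) * x ^ 2
            + (76 * c ^ 3 - 880 * c) * x + 5 * c ^ 4 - 200 * c ^ 2 + 2000) :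
    ∀ x c : ℝ, -2 ≤ c → c ≤ 0 → 0 ≤ x → x ≤ -5 * c / 3 →
      deriv (fun y => f y c) x = 0 → deriv (fun d => f x d) c = 0 →
      x = 0 ∧ c = 0 := by
  intro x c hc1 hc2 hx hxc hdx hdc
  have e1 : (fun y => f y c) = fun y => 45 * y ^ 4 + 156 * c * y ^ 3
      + (182 * c ^ 2 - 552) * y ^ 2 + (76 * c ^ 3 - 880 * c) * y
      + 5 * c ^ 4 - 200 * c ^ 2 + 2000 := funext fun y => hf y c
  have e2 : (fun d => f x d) = fun d => 45 * x ^ 4 + 156 * d * x ^ 3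
      + (182 * d ^ 2 - 552) * x ^ 2 + (76 * d ^ 3 - 880 * d) * x
      + 5 * d ^ 4 - 200 * d ^ 2 + 2000 := funext fun d => hf x d
  have H1 : HasDerivAt (fun y : ℝ => 45 * y ^ 4 + 156 * c * y ^ 3
      + (182 * c ^ 2 - 552) * y ^ 2 + (76 * c ^ 3 - 880 * c) * y
      + 5 * c ^ 4 - 200 * c ^ 2 + 2000)
      (180 * x ^ 3 + 468 * c * x ^ 2 + (364 * c ^ 2 - 1104) * x
        + (76 * c ^ 3 - 880 * c)) x := by
    have h4 : HasDerivAt (fun y : ℝ => y ^ 4) (4 * x ^ 3) x := by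
      simpa using hasDerivAt_pow 4 x
    have h3 : HasDerivAt (fun y : ℝ => y ^ 3) (3 * x ^ 2) x := by
      simpa using hasDerivAt_pow 3 x
    have h2 : HasDerivAt (fun y : ℝ => y ^ 2) (2 * x) x := by
      simpa using hasDerivAt_pow 2 x
    have := ((((h4.const_mul 45).add (h3.const_mul (156 * c))).add
      (h2.const_mul (182 * c ^ 2 - 552))).add
      ((hasDerivAt_id x).const_mul (76 * c ^ 3 - 880 * c))).add_const
      (5 * c ^ 4 - 200 * c ^ 2 + 2000)
    convert this using 1
    · rfl
    · rfl
    · funext y; simp only [id, Pi.add_apply, Pi.neg_apply]; ring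
    · ring
  have H2 : HasDerivAt (fun d : ℝ => 45 * x ^ 4 + 156 * d * x ^ 3
      + (182 * d ^ 2 - 552) * x ^ 2 + (76 * d ^ 3 - 880 * d) * x
      + 5 * d ^ 4 - 200 * d ^ 2 + 2000)
      (156 * x ^ 3 + 364 * c * x ^ 2 + (228 * c ^ 2 - 880) * x
        + 20 * c ^ 3 - 400 * c) c := by
    have h4 : HasDerivAt (fun d : ℝ => d ^ 4) (4 * c ^ 3) c := by
      simpa using hasDerivAt_pow 4 c
    have h3 : HasDerivAt (fun d : ℝ => d ^ 3) (3 * c ^ 2) c := by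
      simpa using hasDerivAt_pow 3 c
    have h2 : HasDerivAt (fun d : ℝ => d ^ 2) (2 * c) c := by
      simpa using hasDerivAt_pow 2 c
    have := (((((((hasDerivAt_id c).const_mul (156 * x ^ 3)).add
      (h2.const_mul (182 * x ^ 2))).add
      (h3.const_mul (76 * x))).add
      (((hasDerivAt_id c).const_mul (880 * x)).neg)).add
      (h4.const_mul 5)).add
      ((h2.const_mul 200).neg)).add_const (45 * x ^ 4 - 552 * x ^ 2 + 2000)
    convert this using 1
    · rfl
    · rfl
    · funext d; simp only [id, Pi.add_apply, Pi.neg_apply]; ring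
    · ring
  rw [e1, H1.deriv] at hdx
  rw [e2, H2.deriv] at hdc
  have hc : c = 0 := by
    have h35 : 0 ≤ -5 * c - 3 * x := by linarith
    have hnc : 0 ≤ -c := by linarith
    nlinarith [mul_nonneg (mul_nonneg hx hx) h35,
      mul_nonneg (mul_nonneg hnc hx) h35,
      mul_nonneg (mul_nonneg hnc (by linarith : (0:ℝ) ≤ 2 - c)) (by linarith : (0:ℝ) ≤ 2 + c),
      mul_nonneg (mul_nonneg hnc hnc) hx]
  refine ⟨?_, hc⟩
  subst hc
  linarith
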